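/- The hypergraph (Q, S) has a 2-colouring if and only if the graph G = G(Q,S) contains P_5 as a contraction. -/

import Mathlib

/-- `W` is an `H`-witness structure of `G`: a family of pairwise disjoint nonempty
connected subsets of `V(G)` covering `V(G)` such that distinct `h₁ h₂` are adjacent in `H`
iff there is an edge of `G` between `W h₁` and `W h₂`. -/
def IsWitnessStructure {V U : Type*} (G : SimpleGraph V) (H : SimpleGraph U)
    (W : U → Set V) : Prop :=
  (∀ h, (W h).Nonempty) ∧
  (∀ h₁ h₂, h₁ ≠ h₂ → Disjoint (W h₁) (W h₂)) ∧
  (⋃ h, W h) = Set.univ ∧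
  (∀ h, (G.induce (W h)).Connected) ∧
  (∀ h₁ h₂, h₁ ≠ h₂ → ((∃ a ∈ W h₁, ∃ b ∈ W h₂, G.Adj a b) ↔ H.Adj h₁ h₂))

/-- `G` contains `H` as a contraction. -/
def ContainsAsContraction {V U : Type*} (G : SimpleGraph V) (H : SimpleGraph U) : Prop :=
  ∃ W : U → Set V, IsWitnessStructure G H W

/-- Raw vertex names for the graph `G(Q,S)`: elements `q_i`, hyperedges `S_j`,
copies `S_j'`, subdivision vertices `q^i_j`, and special vertices `q*`, `u₁`, `u₂`, `v`, `w`. -/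
inductive HVertex (m n : ℕ) : Type
  | elt : Fin m → HVertex m n
  | hyp : Fin n → HVertex m n
  | copy : Fin n → HVertex m n
  | sub : Fin m → Fin n → HVertex m n
  | qstar : HVertex m n
  | u1 : HVertex m n
  | u2 : HVertex m n
  | v : HVertex m n
  | w : HVertex m n

/-- A raw vertex name is an actual vertex of `G(Q,S)`: the subdivision vertex `q^i_j`
exists only when `q_i ∈ S_j`. -/
def HVertex.OK {m n : ℕ} (S : Fin n → Set (Fin m)) : HVertex m n → Prop
  | .sub i j => i ∈ S j
  | _ => True

/-- The vertex set of `G(Q,S)`. -/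
def GVertex {m n : ℕ} (S : Fin n → Set (Fin m)) : Type := {x : HVertex m n // x.OK S}

/-- The (asymmetrically listed) edges of `G(Q,S)`:
`q^i_j q_i`, `q^i_j S_j`, `q_i S_j'` (for `q_i ∈ S_j`), `S_j S_k'` (all `j,k`),
`q* u₁`, `q* u₂`, `q* q^i_j`, `u₁ S_j`, `u₂ S_j`, `u₁ v`, `u₂ v`, `w S_j'`. -/
def baseAdj {m n : ℕ} (S : Fin n → Set (Fin m)) : HVertex m n → HVertex m n → Prop
  | .sub i _, .elt i' => i = i'
  | .sub _ j, .hyp j' => j = j'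
  | .elt i, .copy j => i ∈ S j
  | .hyp _, .copy _ => True
  | .qstar, .u1 => True
  | .qstar, .u2 => True
  | .qstar, .sub _ _ => True
  | .u1, .hyp _ => True
  | .u2, .hyp _ => True
  | .u1, .v => True
  | .u2, .v => True
  | .w, .copy _ => True
  | _, _ => False

/-- The graph `G = G(Q,S)`. -/
def GQS {m n : ℕ} (S : Fin n → Set (Fin m)) : SimpleGraph (GVertex S) :=
  SimpleGraph.fromRel (fun a b => baseAdj S a.1 b.1)

/-- `(Q₁, Q₂)` is a 2-colouring of the hypergraph `(Q, S)`: a partition of `Q` such that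
every hyperedge meets both parts. -/
def IsTwoColouring {m n : ℕ} (S : Fin n → Set (Fin m)) (Q₁ Q₂ : Set (Fin m)) : Prop :=
  Q₁ ∪ Q₂ = Set.univ ∧ Disjoint Q₁ Q₂ ∧ ∀ j, (Q₁ ∩ S j).Nonempty ∧ (Q₂ ∩ S j).Nonempty

open SimpleGraph

namespace Helper

variable {m n : ℕ} {S : Fin n → Set (Fin m)}

lemma baseAdj_ne {x y : HVertex m n} (h : baseAdj S x y) : x ≠ y := by
  cases x <;> cases y <;> simp_all [baseAdj]

lemma GQS_adj {x y : GVertex S} :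
    (GQS S).Adj x y ↔ (baseAdj S x.1 y.1 ∨ baseAdj S y.1 x.1) := by
  rw [GQS, SimpleGraph.fromRel_adj]
  constructor
  · exact fun h => h.2
  · intro h
    refine ⟨fun he => ?_, h⟩
    rcases h with h | h
    · exact baseAdj_ne h (congrArg Subtype.val he)
    · exact baseAdj_ne h (congrArg Subtype.val he).symm

lemma adj1 {x y : GVertex S} (h : baseAdj S x.1 y.1) : (GQS S).Adj x y :=
  GQS_adj.mpr (Or.inl h)

lemma gne {x y : GVertex S} (h : x.1 ≠ y.1) : x ≠ y :=
  fun he => h (congrArg Subtype.val he)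

-- neighbor enumerations
lemma nbr_u1 {z : GVertex S} (h : (GQS S).Adj ⟨.u1, trivial⟩ z) :
    z.1 = .qstar ∨ z.1 = .v ∨ ∃ j, z.1 = .hyp j := by
  have h' := GQS_adj.mp h
  rcases z with ⟨z1, hz⟩
  cases z1 <;> simp_all [baseAdj]

lemma nbr_sub {i : Fin m} {j : Fin n} {hij : (HVertex.sub i j : HVertex m n).OK S}
    {z : GVertex S} (h : (GQS S).Adj ⟨.sub i j, hij⟩ z) :
    z.1 = .elt i ∨ z.1 = .hyp j ∨ z.1 = .qstar := by
  have h' := GQS_adj.mp h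
  rcases z with ⟨z1, hz⟩
  cases z1 <;> simp_all [baseAdj]

lemma nbr_copy {k : Fin n} {z : GVertex S} (h : (GQS S).Adj ⟨.copy k, trivial⟩ z) :
    (∃ i, i ∈ S k ∧ z.1 = .elt i) ∨ (∃ j, z.1 = .hyp j) ∨ z.1 = .w := by
  have h' := GQS_adj.mp h
  rcases z with ⟨z1, hz⟩
  cases z1 <;> simp_all [baseAdj]

lemma nbr_hyp {j : Fin n} {z : GVertex S} (h : (GQS S).Adj ⟨.hyp j, trivial⟩ z) :
    (∃ i, z.1 = .sub i j) ∨ z.1 = .u1 ∨ z.1 = .u2 ∨ ∃ k, z.1 = .copy k := by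
  have h' := GQS_adj.mp h
  rcases z with ⟨z1, hz⟩
  cases z1 <;> simp_all [baseAdj]

lemma nbr_elt {i : Fin m} {z : GVertex S} (h : (GQS S).Adj ⟨.elt i, trivial⟩ z) :
    (∃ j, z.1 = .sub i j) ∨ ∃ k, i ∈ S k ∧ z.1 = .copy k := by
  have h' := GQS_adj.mp h
  rcases z with ⟨z1, hz⟩
  cases z1 <;> simp_all [baseAdj]

lemma nbr_v {z : GVertex S} (h : (GQS S).Adj ⟨.v, trivial⟩ z) :
    z.1 = .u1 ∨ z.1 = .u2 := by
  have h' := GQS_adj.mp h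
  rcases z with ⟨z1, hz⟩
  cases z1 <;> simp_all [baseAdj]

-- connectivity helpers
lemma two_step_aux {V : Type*} {G : SimpleGraph V} {s : Set V} {a b : s}
    (p : (G.induce s).Walk a b) (hp : p.IsPath) (hab : a ≠ b) :
    ∃ z₁ : s, G.Adj a z₁ ∧ (z₁ = b ∨ ∃ z₂ : s, G.Adj z₁ z₂ ∧ z₂ ≠ a) := by
  cases p with
  | nil => exact absurd rfl hab
  | cons h q =>
    rename_i c
    have hac : G.Adj a c := h
    cases q with
    | nil => exact ⟨_, hac, Or.inl rfl⟩
    | cons h2 q2 =>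
      rename_i d
      refine ⟨c, hac, Or.inr ⟨d, h2, ?_⟩⟩
      have hnd := hp.support_nodup
      rw [SimpleGraph.Walk.support_cons, List.nodup_cons] at hnd
      have hd : d ∈ (SimpleGraph.Walk.cons h2 q2).support := by
        rw [SimpleGraph.Walk.support_cons]
        exact List.mem_cons_of_mem _ (SimpleGraph.Walk.start_mem_support q2)
      intro hda
      exact hnd.1 (hda ▸ hd)

lemma two_step {V : Type*} {G : SimpleGraph V} {s : Set V}
    (hc : (G.induce s).Connected) {x y : V} (hx : x ∈ s) (hy : y ∈ s) (hxy : x ≠ y) :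
    ∃ z₁ ∈ s, G.Adj x z₁ ∧ (z₁ = y ∨ ∃ z₂ ∈ s, G.Adj z₁ z₂ ∧ z₂ ≠ x) := by
  haveI : DecidableEq V := Classical.decEq _
  obtain ⟨p⟩ := hc ⟨x, hx⟩ ⟨y, hy⟩
  have hab : (⟨x, hx⟩ : s) ≠ ⟨y, hy⟩ := fun he => hxy (congrArg Subtype.val he)
  obtain ⟨z₁, h1, h2⟩ := two_step_aux p.toPath.1 p.toPath.2 hab
  refine ⟨z₁.1, z₁.2, h1, ?_⟩
  rcases h2 with h2 | ⟨z₂, h3, h4⟩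
  · exact Or.inl (congrArg Subtype.val h2)
  · exact Or.inr ⟨z₂.1, z₂.2, h3, fun he => h4 (Subtype.ext he)⟩

lemma neighbor_in_bag {V : Type*} {G : SimpleGraph V} {s : Set V}
    (hc : (G.induce s).Connected) {x y : V} (hx : x ∈ s) (hy : y ∈ s) (hxy : x ≠ y) :
    ∃ z ∈ s, G.Adj x z := by
  obtain ⟨z₁, hz, h1, _⟩ := two_step hc hx hy hxy
  exact ⟨z₁, hz, h1⟩

end Helper
namespace Helper

variable {m n : ℕ} {S : Fin n → Set (Fin m)}

abbrev xv : GVertex S := ⟨.v, trivial⟩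
abbrev xw : GVertex S := ⟨.w, trivial⟩
abbrev xq : GVertex S := ⟨.qstar, trivial⟩
abbrev xu1 : GVertex S := ⟨.u1, trivial⟩
abbrev xu2 : GVertex S := ⟨.u2, trivial⟩
abbrev xh (j : Fin n) : GVertex S := ⟨.hyp j, trivial⟩
abbrev xc (k : Fin n) : GVertex S := ⟨.copy k, trivial⟩
abbrev xe (i : Fin m) : GVertex S := ⟨.elt i, trivial⟩
abbrev xs (i : Fin m) (j : Fin n) (h : i ∈ S j) : GVertex S := ⟨.sub i j, h⟩

section Backward

variable (hn : 2 ≤ n) (hSne : ∀ j, (S j).Nonempty)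
  (hSlast : S ⟨n - 1, Nat.sub_lt (by omega) Nat.one_pos⟩ = Set.univ)
  (W : Fin 5 → Set (GVertex S)) (f : GVertex S → Fin 5)
  (hf : ∀ x, x ∈ W (f x))
  (hfeq : ∀ x h, x ∈ W h → f x = h)
  (hstep : ∀ x y, (GQS S).Adj x y → (f x).1 ≤ (f y).1 + 1 ∧ (f y).1 ≤ (f x).1 + 1)
  (hconn : ∀ h, ((GQS S).induce (W h)).Connected)

include hn hSlast hf hfeq hstep hconn

/-- Main case: `v ∈ W 0`, `w ∈ W 4` yields a 2-colouring. -/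
lemma main_case (hv : (f (xv : GVertex S)).1 = 0) (hw : (f (xw : GVertex S)).1 = 4) :
    ∃ Q₁ Q₂ : Set (Fin m), IsTwoColouring S Q₁ Q₂ := by
  have hn0 : 0 < n := by omega
  set j0 : Fin n := ⟨0, hn0⟩ with hj0def
  set jl : Fin n := ⟨n - 1, by omega⟩ with hjldef
  have memW : ∀ (x : GVertex S) (k : Fin 5), (f x).1 = k.1 → x ∈ W k :=
    fun x k hk => (Fin.ext hk : f x = k) ▸ hf x
  have fval : ∀ (x : GVertex S) (k : Fin 5), x ∈ W k → (f x).1 = k.1 :=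
    fun x k h => congrArg Fin.val (hfeq x k h)
  have hSl : ∀ i : Fin m, i ∈ S jl := fun i => by rw [hjldef, hSlast]; trivial
  -- adjacency facts
  have a_u1v : (GQS S).Adj xu1 xv := adj1 trivial
  have a_u2v : (GQS S).Adj xu2 xv := adj1 trivial
  have a_u1h : ∀ j, (GQS S).Adj xu1 (xh j) := fun j => adj1 trivial
  have a_u2h : ∀ j, (GQS S).Adj xu2 (xh j) := fun j => adj1 trivial
  have a_hc : ∀ j k, (GQS S).Adj (xh j) (xc k) := fun j k => adj1 trivial
  have a_wc : ∀ k, (GQS S).Adj xw (xc k) := fun k => adj1 trivial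
  have a_qu1 : (GQS S).Adj xq xu1 := adj1 trivial
  have a_ec : ∀ i, (GQS S).Adj (xe i) (xc jl) := fun i => adj1 (hSl i)
  have a_qs : ∀ i j h, (GQS S).Adj xq (xs i j h) := fun i j h => adj1 trivial
  have a_se : ∀ i j h, (GQS S).Adj (xs i j h) (xe i) := fun i j h => adj1 rfl
  have a_sh : ∀ i j h, (GQS S).Adj (xs i j h) (xh j) := fun i j h => adj1 rfl
  -- numeric facts
  have s1 := hstep _ _ a_u1v
  have s2 := hstep _ _ (a_u1h j0)
  have s3 := hstep _ _ (a_hc j0 jl)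
  have s4 := hstep _ _ (a_wc jl)
  have hu1 : (f (xu1 : GVertex S)).1 = 1 := by omega
  have hu2 : (f (xu2 : GVertex S)).1 = 1 := by
    have t1 := hstep _ _ a_u2v; have t2 := hstep _ _ (a_u2h j0); omega
  have hcl : (f (xc jl : GVertex S)).1 = 3 := by omega
  have hhyp : ∀ j, (f (xh j : GVertex S)).1 = 2 := by
    intro j
    have t1 := hstep _ _ (a_u1h j); have t2 := hstep _ _ (a_hc j jl); omega
  have hcop : ∀ k, (f (xc k : GVertex S)).1 = 3 := by
    intro k
    have t1 := hstep _ _ (a_hc j0 k); have t2 := hstep _ _ (a_wc k)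
    have t3 := hhyp j0; omega
  -- qstar is in bag 1
  have hqs : (f (xq : GVertex S)).1 = 1 := by
    obtain ⟨z, hz1, hz2⟩ := neighbor_in_bag (hconn 1) (memW xu1 1 hu1) (memW xu2 1 hu2)
      (gne (fun h => by cases h))
    have hfz := fval _ _ hz1
    rcases nbr_u1 hz2 with h | h | ⟨j, h⟩
    · have : z = xq := Subtype.ext h
      rw [← this]; exact hfz
    · have : z = xv := Subtype.ext h
      rw [this] at hfz; omega
    · have : z = xh j := Subtype.ext h
      rw [this] at hfz; rw [hhyp j] at hfz; omega
  have hsub : ∀ i j (h : i ∈ S j), (f (xs i j h : GVertex S)).1 ≤ 2 := by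
    intro i j h
    have t1 := hstep _ _ (a_qs i j h); omega
  -- elements are in bag 2 or 3
  have helt : ∀ i, (f (xe i : GVertex S)).1 = 2 ∨ (f (xe i : GVertex S)).1 = 3 := by
    intro i
    have t1 := hstep _ _ (a_ec i)
    have t4 : (f (xe i : GVertex S)).1 ≠ 4 := by
      intro h4
      obtain ⟨z, hz1, hz2⟩ := neighbor_in_bag (hconn 4) (memW (xe i) 4 h4)
        (memW xw 4 hw) (gne (fun h => by cases h))
      have hfz := fval _ _ hz1
      rcases nbr_elt hz2 with ⟨j, h⟩ | ⟨k, hik, h⟩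
      · rcases z with ⟨z1, hok⟩
        obtain rfl : z1 = _ := h
        have t6 : (f (xs i j hok : GVertex S)).1 = 4 := hfz
        have := hsub i j hok
        omega
      · have : z = xc k := Subtype.ext h
        rw [this, hcop k] at hfz; omega
    have t5 := (f (xe i : GVertex S)).isLt
    omega
  classical
  refine ⟨{i | (f (xe i : GVertex S)).1 = 2}, {i | (f (xe i : GVertex S)).1 = 3}, ?_, ?_, ?_⟩
  · ext i; simpa using helt i
  · rw [Set.disjoint_left]; intro i h1 h2; simp at h1 h2; omega
  · intro j
    have hjne : ∃ j' : Fin n, j' ≠ j := by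
      by_cases h0 : j.1 = 0
      · exact ⟨⟨1, by omega⟩, fun he => by
          have := congrArg Fin.val he; simp at this; omega⟩
      · exact ⟨⟨0, by omega⟩, fun he => by
          have := congrArg Fin.val he; simp at this; omega⟩
    obtain ⟨j', hj'⟩ := hjne
    constructor
    · -- Q₁ ∩ S j nonempty via two-step in bag 2
      have hne : (xh j : GVertex S) ≠ xh j' :=
        gne (fun h => hj' (by simpa using h.symm))
      obtain ⟨z1, hz1, hadj1, hrest⟩ := two_step (hconn 2) (memW (xh j) 2 (hhyp j))
        (memW (xh j') 2 (hhyp j')) hne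
      have hfz1 := fval _ _ hz1
      rcases nbr_hyp hadj1 with ⟨i, h⟩ | h | h | ⟨k, h⟩
      · -- z1 is sub i j
        rcases z1 with ⟨z1v, hok⟩
        obtain rfl : z1v = _ := h
        rcases hrest with h | ⟨z2, hz2, hadj2, hz2ne⟩
        · exact absurd (congrArg Subtype.val h) (fun hh => by cases hh)
        · have hfz2 := fval _ _ hz2
          rcases nbr_sub hadj2 with h | h | h
          · have : z2 = xe i := Subtype.ext h
            rw [this] at hfz2
            exact ⟨i, hfz2, hok⟩
          · have : z2 = xh j := Subtype.ext h
            exact absurd this hz2ne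
          · have : z2 = xq := Subtype.ext h
            rw [this, hqs] at hfz2; omega
      · have : z1 = xu1 := Subtype.ext h
        rw [this, hu1] at hfz1; omega
      · have : z1 = xu2 := Subtype.ext h
        rw [this, hu2] at hfz1; omega
      · have : z1 = xc k := Subtype.ext h
        rw [this, hcop k] at hfz1; omega
    · -- Q₂ ∩ S j nonempty via neighbour of copy j in bag 3
      have hne : (xc j : GVertex S) ≠ xc j' :=
        gne (fun h => hj' (by simpa using h.symm))
      obtain ⟨z, hz1, hz2⟩ := neighbor_in_bag (hconn 3) (memW (xc j) 3 (hcop j))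
        (memW (xc j') 3 (hcop j')) hne
      have hfz := fval _ _ hz1
      rcases nbr_copy hz2 with ⟨i, hik, h⟩ | ⟨j'', h⟩ | h
      · have : z = xe i := Subtype.ext h
        rw [this] at hfz
        exact ⟨i, hfz, hik⟩
      · have : z = xh j'' := Subtype.ext h
        rw [this, hhyp j''] at hfz; omega
      · have : z = xw := Subtype.ext h
        rw [this, hw] at hfz; omega

end Backward
end Helper
namespace Helper

variable {m n : ℕ} {S : Fin n → Set (Fin m)}

section Backward2

variable (hn : 2 ≤ n) (hSne : ∀ j, (S j).Nonempty)
  (hSlast : S ⟨n - 1, Nat.sub_lt (by omega) Nat.one_pos⟩ = Set.univ)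
  (W : Fin 5 → Set (GVertex S)) (f : GVertex S → Fin 5)
  (hf : ∀ x, x ∈ W (f x))
  (hfeq : ∀ x h, x ∈ W h → f x = h)
  (hstep : ∀ x y, (GQS S).Adj x y → (f x).1 ≤ (f y).1 + 1 ∧ (f y).1 ≤ (f x).1 + 1)
  (hconn : ∀ h, ((GQS S).induce (W h)).Connected)

include hn hSlast hf hfeq hstep hconn

lemma badA (hSne : ∀ j, (S j).Nonempty)
    (hq : (f (xq : GVertex S)).1 = 0) (hw : (f (xw : GVertex S)).1 = 4) : False := by
  have hn0 : 0 < n := by omega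
  set j0 : Fin n := ⟨0, hn0⟩ with hj0def
  set jl : Fin n := ⟨n - 1, by omega⟩ with hjldef
  have memW : ∀ (x : GVertex S) (k : Fin 5), (f x).1 = k.1 → x ∈ W k :=
    fun x k hk => (Fin.ext hk : f x = k) ▸ hf x
  have fval : ∀ (x : GVertex S) (k : Fin 5), x ∈ W k → (f x).1 = k.1 :=
    fun x k h => congrArg Fin.val (hfeq x k h)
  obtain ⟨i0, hi0⟩ := hSne j0
  have s1 := hstep _ _ (adj1 trivial : (GQS S).Adj xq xu1)
  have s2 := hstep _ _ (adj1 trivial : (GQS S).Adj xu1 (xh j0))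
  have s3 := hstep _ _ (adj1 trivial : (GQS S).Adj (xh j0) (xc jl))
  have s4 := hstep _ _ (adj1 trivial : (GQS S).Adj xw (xc jl))
  have hu1 : (f (xu1 : GVertex S)).1 = 1 := by omega
  have hhyp : ∀ j, (f (xh j : GVertex S)).1 = 2 := by
    intro j
    have t1 := hstep _ _ (adj1 trivial : (GQS S).Adj xu1 (xh j))
    have t2 := hstep _ _ (adj1 trivial : (GQS S).Adj (xh j) (xc jl))
    omega
  have t1 := hstep _ _ (adj1 trivial : (GQS S).Adj xq (xs i0 j0 hi0))
  have t2 := hstep _ _ (adj1 rfl : (GQS S).Adj (xs i0 j0 hi0) (xh j0))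
  have hs0 : (f (xs i0 j0 hi0 : GVertex S)).1 = 1 := by
    have := hhyp j0; omega
  obtain ⟨z, hz1, hz2⟩ := neighbor_in_bag (hconn 1) (memW (xs i0 j0 hi0) 1 hs0)
    (memW xu1 1 hu1) (gne (fun h => by cases h))
  have hfz := fval _ _ hz1
  rcases nbr_sub hz2 with h | h | h
  · have hze : z = xe i0 := Subtype.ext h
    have t3 := hstep _ _ (adj1 (show i0 ∈ S jl by rw [hjldef, hSlast]; trivial) :
      (GQS S).Adj (xe i0) (xc jl))
    rw [hze] at hfz; omega
  · have hze : z = xh j0 := Subtype.ext h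
    rw [hze] at hfz; have := hhyp j0; omega
  · have hze : z = xq := Subtype.ext h
    rw [hze] at hfz; omega

lemma badB (hv : (f (xv : GVertex S)).1 = 0) (i : Fin m)
    (hi : (f (xe i : GVertex S)).1 = 4) : False := by
  have hn0 : 0 < n := by omega
  set j0 : Fin n := ⟨0, hn0⟩ with hj0def
  set jl : Fin n := ⟨n - 1, by omega⟩ with hjldef
  have memW : ∀ (x : GVertex S) (k : Fin 5), (f x).1 = k.1 → x ∈ W k :=
    fun x k hk => (Fin.ext hk : f x = k) ▸ hf x
  have fval : ∀ (x : GVertex S) (k : Fin 5), x ∈ W k → (f x).1 = k.1 :=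
    fun x k h => congrArg Fin.val (hfeq x k h)
  have hil : i ∈ S jl := by rw [hjldef, hSlast]; trivial
  have s1 := hstep _ _ (adj1 trivial : (GQS S).Adj xu1 xv)
  have s2 := hstep _ _ (adj1 trivial : (GQS S).Adj xu1 (xh j0))
  have s3 := hstep _ _ (adj1 trivial : (GQS S).Adj (xh j0) (xc jl))
  have s4 := hstep _ _ (adj1 hil : (GQS S).Adj (xe i) (xc jl))
  have s5 := hstep _ _ (adj1 trivial : (GQS S).Adj xu2 xv)
  have s6 := hstep _ _ (adj1 trivial : (GQS S).Adj xu2 (xh j0))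
  have hu1 : (f (xu1 : GVertex S)).1 = 1 := by omega
  have hu2 : (f (xu2 : GVertex S)).1 = 1 := by omega
  have hhyp : ∀ j, (f (xh j : GVertex S)).1 = 2 := by
    intro j
    have t1 := hstep _ _ (adj1 trivial : (GQS S).Adj xu1 (xh j))
    have t2 := hstep _ _ (adj1 trivial : (GQS S).Adj (xh j) (xc jl))
    omega
  obtain ⟨z, hz1, hz2⟩ := neighbor_in_bag (hconn 1) (memW xu1 1 hu1)
    (memW xu2 1 hu2) (gne (fun h => by cases h))
  have hfz := fval _ _ hz1
  have hq1 : (f (xq : GVertex S)).1 = 1 := by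
    rcases nbr_u1 hz2 with h | h | ⟨j, h⟩
    · have hze : z = xq := Subtype.ext h; rw [hze] at hfz; exact hfz
    · have hze : z = xv := Subtype.ext h; rw [hze] at hfz; omega
    · have hze : z = xh j := Subtype.ext h; rw [hze] at hfz
      have := hhyp j; omega
  have t1 := hstep _ _ (adj1 trivial : (GQS S).Adj xq (xs i jl hil))
  have t2 := hstep _ _ (adj1 rfl : (GQS S).Adj (xs i jl hil) (xe i))
  omega

omit hf hfeq hconn in
lemma classify (a b : GVertex S) (ha : (f a).1 = 0) (hb : (f b).1 = 4) :
    ((f (xv : GVertex S)).1 = 0 ∧ (f (xw : GVertex S)).1 = 4) ∨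
    ((f (xw : GVertex S)).1 = 0 ∧ (f (xv : GVertex S)).1 = 4) ∨
    ((f (xq : GVertex S)).1 = 0 ∧ (f (xw : GVertex S)).1 = 4) ∨
    ((f (xw : GVertex S)).1 = 0 ∧ (f (xq : GVertex S)).1 = 4) ∨
    (∃ i, (f (xv : GVertex S)).1 = 0 ∧ (f (xe i : GVertex S)).1 = 4) ∨
    (∃ i, (f (xe i : GVertex S)).1 = 0 ∧ (f (xv : GVertex S)).1 = 4) := by
  have hn0 : 0 < n := by omega
  set j0 : Fin n := ⟨0, hn0⟩ with hj0def
  set jl : Fin n := ⟨n - 1, by omega⟩ with hjldef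
  have hSl : ∀ i : Fin m, i ∈ S jl := fun i => by rw [hjldef, hSlast]; trivial
  have a_u1v : (GQS S).Adj xu1 xv := adj1 trivial
  have a_u2v : (GQS S).Adj xu2 xv := adj1 trivial
  have a_u1h : ∀ j, (GQS S).Adj xu1 (xh j) := fun j => adj1 trivial
  have a_u2h : ∀ j, (GQS S).Adj xu2 (xh j) := fun j => adj1 trivial
  have a_hc : ∀ j k, (GQS S).Adj (xh j) (xc k) := fun j k => adj1 trivial
  have a_wc : ∀ k, (GQS S).Adj xw (xc k) := fun k => adj1 trivial
  have a_qu1 : (GQS S).Adj xq xu1 := adj1 trivial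
  have a_qu2 : (GQS S).Adj xq xu2 := adj1 trivial
  have a_ec : ∀ i, (GQS S).Adj (xe i) (xc jl) := fun i => adj1 (hSl i)
  have a_qs : ∀ i j h, (GQS S).Adj xq (xs i j h) := fun i j h => adj1 trivial
  have a_se : ∀ i j h, (GQS S).Adj (xs i j h) (xe i) := fun i j h => adj1 rfl
  have a_sh : ∀ i j h, (GQS S).Adj (xs i j h) (xh j) := fun i j h => adj1 rfl
  have g1 := hstep _ _ (a_hc j0 jl)
  have g2 := hstep _ _ (a_u1h j0)
  have g3 := hstep _ _ a_qu1
  have g4 := hstep _ _ (a_wc jl)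
  have B1 := (f (xq : GVertex S)).isLt
  have B2 := (f (xu1 : GVertex S)).isLt
  have B3 := (f (xh j0 : GVertex S)).isLt
  have B4 := (f (xc jl : GVertex S)).isLt
  have B5 := (f (xw : GVertex S)).isLt
  have hL : (a = xv ∧ (f (xu1 : GVertex S)).1 ≤ 1) ∨
      (a = xq ∧ (f (xq : GVertex S)).1 = 0) ∨
      ((f (xh j0 : GVertex S)).1 ≤ 1 ∧ (f (xq : GVertex S)).1 ≤ 1) ∨
      ((f (xc jl : GVertex S)).1 ≤ 1 ∧ (f (xu1 : GVertex S)).1 ≤ 1) ∨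
      ((∃ k, a = xc k) ∧ (f (xh j0 : GVertex S)).1 ≤ 1 ∧ (f (xw : GVertex S)).1 ≤ 1) ∨
      ((∃ i j h, a = xs i j h) ∧ (f (xq : GVertex S)).1 ≤ 1 ∧ (f (xc jl : GVertex S)).1 ≤ 2) ∨
      ((∃ i, a = xe i) ∧ (f (xc jl : GVertex S)).1 ≤ 1 ∧ (f (xq : GVertex S)).1 ≤ 2) ∨
      (a = xw ∧ (f (xc jl : GVertex S)).1 ≤ 1 ∧ (f (xw : GVertex S)).1 = 0) := by
    clear g1 g2 g3 g4 hb
    rcases a with ⟨a1, hok⟩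
    cases a1 with
    | v =>
      have ha' : (f (xv : GVertex S)).1 = 0 := ha
      exact Or.inl ⟨rfl, by have := hstep _ _ a_u1v; omega⟩
    | qstar =>
      exact Or.inr (Or.inl ⟨rfl, ha⟩)
    | u1 =>
      have ha' : (f (xu1 : GVertex S)).1 = 0 := ha
      exact Or.inr (Or.inr (Or.inl ⟨by have := hstep _ _ (a_u1h j0); omega,
        by have := hstep _ _ a_qu1; omega⟩))
    | u2 =>
      have ha' : (f (xu2 : GVertex S)).1 = 0 := ha
      exact Or.inr (Or.inr (Or.inl ⟨by have := hstep _ _ (a_u2h j0); omega,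
        by have := hstep _ _ a_qu2; omega⟩))
    | hyp j =>
      have ha' : (f (xh j : GVertex S)).1 = 0 := ha
      exact Or.inr (Or.inr (Or.inr (Or.inl ⟨by have := hstep _ _ (a_hc j jl); omega,
        by have := hstep _ _ (a_u1h j); omega⟩)))
    | copy k =>
      have ha' : (f (xc k : GVertex S)).1 = 0 := ha
      exact Or.inr (Or.inr (Or.inr (Or.inr (Or.inl ⟨⟨k, rfl⟩,
        by have := hstep _ _ (a_hc j0 k); omega,
        by have := hstep _ _ (a_wc k); omega⟩))))
    | sub i j =>
      have ha' : (f (xs i j hok : GVertex S)).1 = 0 := ha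
      refine Or.inr (Or.inr (Or.inr (Or.inr (Or.inr (Or.inl ⟨⟨i, j, hok, rfl⟩,
        by have := hstep _ _ (a_qs i j hok); omega, ?_⟩)))))
      have t1 := hstep _ _ (a_se i j hok)
      have t2 := hstep _ _ (a_ec i)
      omega
    | elt i =>
      have ha' : (f (xe i : GVertex S)).1 = 0 := ha
      refine Or.inr (Or.inr (Or.inr (Or.inr (Or.inr (Or.inr (Or.inl ⟨⟨i, rfl⟩,
        by have := hstep _ _ (a_ec i); omega, ?_⟩))))))
      have t1 := hstep _ _ (a_se i jl (hSl i))
      have t2 := hstep _ _ (a_qs i jl (hSl i))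
      omega
    | w =>
      have ha' : (f (xw : GVertex S)).1 = 0 := ha
      exact Or.inr (Or.inr (Or.inr (Or.inr (Or.inr (Or.inr (Or.inr
        ⟨rfl, by have := hstep _ _ (a_wc jl); omega, ha'⟩))))))
  have hH : (b = xv ∧ 3 ≤ (f (xu1 : GVertex S)).1) ∨
      (b = xq ∧ (f (xq : GVertex S)).1 = 4) ∨
      (3 ≤ (f (xh j0 : GVertex S)).1 ∧ 3 ≤ (f (xq : GVertex S)).1) ∨
      (3 ≤ (f (xc jl : GVertex S)).1 ∧ 3 ≤ (f (xu1 : GVertex S)).1) ∨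
      ((∃ k, b = xc k) ∧ 3 ≤ (f (xh j0 : GVertex S)).1 ∧ 3 ≤ (f (xw : GVertex S)).1) ∨
      ((∃ i j h, b = xs i j h) ∧ 3 ≤ (f (xq : GVertex S)).1 ∧ 2 ≤ (f (xc jl : GVertex S)).1) ∨
      ((∃ i, b = xe i) ∧ 3 ≤ (f (xc jl : GVertex S)).1 ∧ 2 ≤ (f (xq : GVertex S)).1) ∨
      (b = xw ∧ 3 ≤ (f (xc jl : GVertex S)).1 ∧ (f (xw : GVertex S)).1 = 4) := by
    clear g1 g2 g3 g4 ha hL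
    rcases b with ⟨b1, hok⟩
    cases b1 with
    | v =>
      have hb' : (f (xv : GVertex S)).1 = 4 := hb
      exact Or.inl ⟨rfl, by have := hstep _ _ a_u1v; omega⟩
    | qstar =>
      exact Or.inr (Or.inl ⟨rfl, hb⟩)
    | u1 =>
      have hb' : (f (xu1 : GVertex S)).1 = 4 := hb
      exact Or.inr (Or.inr (Or.inl ⟨by have := hstep _ _ (a_u1h j0); omega,
        by have := hstep _ _ a_qu1; omega⟩))
    | u2 =>
      have hb' : (f (xu2 : GVertex S)).1 = 4 := hb
      exact Or.inr (Or.inr (Or.inl ⟨by have := hstep _ _ (a_u2h j0); omega,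
        by have := hstep _ _ a_qu2; omega⟩))
    | hyp j =>
      have hb' : (f (xh j : GVertex S)).1 = 4 := hb
      exact Or.inr (Or.inr (Or.inr (Or.inl ⟨by have := hstep _ _ (a_hc j jl); omega,
        by have := hstep _ _ (a_u1h j); omega⟩)))
    | copy k =>
      have hb' : (f (xc k : GVertex S)).1 = 4 := hb
      exact Or.inr (Or.inr (Or.inr (Or.inr (Or.inl ⟨⟨k, rfl⟩,
        by have := hstep _ _ (a_hc j0 k); omega,
        by have := hstep _ _ (a_wc k); omega⟩))))
    | sub i j =>
      have hb' : (f (xs i j hok : GVertex S)).1 = 4 := hb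
      refine Or.inr (Or.inr (Or.inr (Or.inr (Or.inr (Or.inl ⟨⟨i, j, hok, rfl⟩,
        by have := hstep _ _ (a_qs i j hok); omega, ?_⟩)))))
      have t1 := hstep _ _ (a_se i j hok)
      have t2 := hstep _ _ (a_ec i)
      omega
    | elt i =>
      have hb' : (f (xe i : GVertex S)).1 = 4 := hb
      refine Or.inr (Or.inr (Or.inr (Or.inr (Or.inr (Or.inr (Or.inl ⟨⟨i, rfl⟩,
        by have := hstep _ _ (a_ec i); omega, ?_⟩))))))
      have t1 := hstep _ _ (a_se i jl (hSl i))
      have t2 := hstep _ _ (a_qs i jl (hSl i))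
      omega
    | w =>
      have hb' : (f (xw : GVertex S)).1 = 4 := hb
      exact Or.inr (Or.inr (Or.inr (Or.inr (Or.inr (Or.inr (Or.inr
        ⟨rfl, by have := hstep _ _ (a_wc jl); omega, hb'⟩))))))
  rcases hL with ⟨haT, hL1⟩ | ⟨haT, hL1⟩ | hL1 | hL1 | ⟨⟨k, haT⟩, hL1⟩ |
    ⟨⟨i, j, hsij, haT⟩, hL1⟩ | ⟨⟨i, haT⟩, hL1⟩ | ⟨haT, hL1⟩ <;>
  rcases hH with ⟨hbT, hH1⟩ | ⟨hbT, hH1⟩ | hH1 | hH1 | ⟨⟨k', hbT⟩, hH1⟩ |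
    ⟨⟨i', j', hsij', hbT⟩, hH1⟩ | ⟨⟨i', hbT⟩, hH1⟩ | ⟨hbT, hH1⟩ <;>
  first
  | omega
  | (rw [haT] at ha; rw [hbT] at hb;
     first
     | omega
     | exact Or.inl ⟨ha, hb⟩
     | exact Or.inr (Or.inl ⟨ha, hb⟩)
     | exact Or.inr (Or.inr (Or.inl ⟨ha, hb⟩))
     | exact Or.inr (Or.inr (Or.inr (Or.inl ⟨ha, hb⟩)))
     | exact Or.inr (Or.inr (Or.inr (Or.inr (Or.inl ⟨i', ha, hb⟩))))
     | exact Or.inr (Or.inr (Or.inr (Or.inr (Or.inr ⟨i, ha, hb⟩))))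
     | (have p1 := hstep _ _ (a_hc j' k); have p2 := hstep _ _ (a_sh i' j' hsij'); omega)
     | (have p1 := hstep _ _ (a_hc j k'); have p2 := hstep _ _ (a_sh i j hsij); omega))

end Backward2
end Helper
namespace Helper

open SimpleGraph

variable {m n : ℕ} {S : Fin n → Set (Fin m)}

def revF : Fin 5 → Fin 5 := fun h => ⟨4 - h.1, by omega⟩

lemma revF_invol : ∀ h : Fin 5, revF (revF h) = h := by decide

lemma revF_inj : Function.Injective revF := fun a b h => by
  have := congrArg Fin.val h
  simp only [revF] at this
  have ha := a.isLt; have hb := b.isLt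
  exact Fin.ext (by omega)

lemma revF_adj {h1 h2 : Fin 5} :
    (pathGraph 5).Adj (revF h1) (revF h2) ↔ (pathGraph 5).Adj h1 h2 := by
  rw [pathGraph_adj, pathGraph_adj]
  simp only [revF]
  have := h1.isLt; have := h2.isLt
  omega

lemma rev_wit (W : Fin 5 → Set (GVertex S))
    (hW : IsWitnessStructure (GQS S) (pathGraph 5) W) :
    IsWitnessStructure (GQS S) (pathGraph 5) (fun h => W (revF h)) := by
  obtain ⟨h1, h2, h3, h4, h5⟩ := hW
  refine ⟨fun h => h1 _, fun p q hpq => h2 _ _ (fun he => hpq (revF_inj he)), ?_,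
    fun h => h4 _, fun p q hpq => ?_⟩
  · apply Set.eq_univ_of_forall
    intro x
    have hx : x ∈ ⋃ h, W h := h3 ▸ Set.mem_univ x
    obtain ⟨h, hh⟩ := Set.mem_iUnion.mp hx
    exact Set.mem_iUnion.mpr ⟨revF h, by rw [revF_invol]; exact hh⟩
  · rw [h5 (revF p) (revF q) (fun he => hpq (revF_inj he))]
    exact revF_adj

lemma package (W : Fin 5 → Set (GVertex S))
    (hW : IsWitnessStructure (GQS S) (pathGraph 5) W) :
    ∃ f : GVertex S → Fin 5, (∀ x, x ∈ W (f x)) ∧ (∀ x h, x ∈ W h → f x = h) ∧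
      (∀ x y, (GQS S).Adj x y → (f x).1 ≤ (f y).1 + 1 ∧ (f y).1 ≤ (f x).1 + 1) := by
  obtain ⟨h1, h2, h3, h4, h5⟩ := hW
  have hex : ∀ x : GVertex S, ∃ h, x ∈ W h := fun x =>
    Set.mem_iUnion.mp (h3 ▸ Set.mem_univ x)
  refine ⟨fun x => (hex x).choose, fun x => (hex x).choose_spec, ?_, ?_⟩
  · intro x h hx
    by_contra hne
    exact Set.disjoint_left.mp (h2 _ _ hne) (hex x).choose_spec hx
  · intro x y hxy
    set f := fun x : GVertex S => (hex x).choose with hfdef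
    by_cases he : f x = f y
    · rw [he]; omega
    · have : (pathGraph 5).Adj (f x) (f y) :=
        (h5 _ _ he).mp ⟨x, (hex x).choose_spec, y, (hex y).choose_spec, hxy⟩
      rw [pathGraph_adj] at this
      omega

lemma backward (hn : 2 ≤ n) (hSne : ∀ j, (S j).Nonempty)
    (hSlast : S ⟨n - 1, Nat.sub_lt (by omega) Nat.one_pos⟩ = Set.univ)
    (hC : ContainsAsContraction (GQS S) (SimpleGraph.pathGraph 5)) :
    ∃ Q₁ Q₂ : Set (Fin m), IsTwoColouring S Q₁ Q₂ := by
  obtain ⟨W, hW⟩ := hC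
  obtain ⟨f, hf, hfeq, hstep⟩ := package W hW
  have hconn : ∀ h, ((GQS S).induce (W h)).Connected := hW.2.2.2.1
  obtain ⟨a, haW⟩ := hW.1 0
  obtain ⟨b, hbW⟩ := hW.1 4
  have ha : (f a).1 = 0 := by rw [hfeq a 0 haW]; rfl
  have hb : (f b).1 = 4 := by rw [hfeq b 4 hbW]; rfl
  -- the reversed witness structure
  have hW' := rev_wit W hW
  obtain ⟨f', hf', hfeq', hstep'⟩ := package _ hW'
  have hconn' : ∀ h, ((GQS S).induce ((fun h => W (revF h)) h)).Connected :=
    hW'.2.2.2.1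
  have hrev : ∀ (x : GVertex S) (k k' : Fin 5), revF k' = k → (f x).1 = k.1 →
      (f' x).1 = k'.1 := by
    intro x k k' hk hx
    have hxk : x ∈ W (revF k') := by
      rw [hk, ← (Fin.ext hx : f x = k)]; exact hf x
    rw [hfeq' x k' hxk]
  rcases classify hn hSlast f hstep a b ha hb with
    ⟨h1, h2⟩ | ⟨h1, h2⟩ | ⟨h1, h2⟩ | ⟨h1, h2⟩ | ⟨i, h1, h2⟩ | ⟨i, h1, h2⟩
  · exact main_case hn hSlast W f hf hfeq hstep hconn h1 h2
  · exact main_case hn hSlast _ f' hf' hfeq' hstep' hconn'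
      (hrev _ 4 0 (by decide) h2) (hrev _ 0 4 (by decide) h1)
  · exact absurd (badA hn hSlast W f hf hfeq hstep hconn hSne h1 h2) id
  · exact absurd (badA hn hSlast _ f' hf' hfeq' hstep' hconn' hSne
      (hrev _ 4 0 (by decide) h2) (hrev _ 0 4 (by decide) h1)) id
  · exact absurd (badB hn hSlast W f hf hfeq hstep hconn h1 i h2) id
  · exact absurd (badB hn hSlast _ f' hf' hfeq' hstep' hconn'
      (hrev _ 4 0 (by decide) h2) i (hrev _ 0 4 (by decide) h1)) id

end Helper
namespace Helper

open SimpleGraph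

variable {m n : ℕ} {S : Fin n → Set (Fin m)}

open Classical in
/-- bag assignment for the forward direction -/
noncomputable def bagF (Q₁ : Set (Fin m)) : HVertex m n → Fin 5
  | .v => 0
  | .qstar => 1
  | .u1 => 1
  | .u2 => 1
  | .hyp _ => 2
  | .sub _ _ => 2
  | .elt i => if i ∈ Q₁ then 2 else 3
  | .copy _ => 3
  | .w => 4

/-- witness bags for the forward direction -/
noncomputable def bagW (S : Fin n → Set (Fin m)) (Q₁ : Set (Fin m)) :
    Fin 5 → Set (GVertex S) := fun h => {x : GVertex S | bagF Q₁ x.1 = h}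

lemma ireach {V : Type*} {G : SimpleGraph V} (s : Set V) {x y : V}
    (hx : x ∈ s) (hy : y ∈ s) (h : G.Adj x y) :
    (G.induce s).Reachable ⟨x, hx⟩ ⟨y, hy⟩ :=
  SimpleGraph.Adj.reachable (by exact h)

lemma conn_of_hub {V : Type*} {G : SimpleGraph V} {s : Set V} (hub : V) (hhub : hub ∈ s)
    (hr : ∀ x (hx : x ∈ s), (G.induce s).Reachable ⟨x, hx⟩ ⟨hub, hhub⟩) :
    (G.induce s).Connected := by
  haveI : Nonempty s := ⟨⟨hub, hhub⟩⟩
  exact ⟨fun a b => (hr a.1 a.2).trans (hr b.1 b.2).symm⟩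

lemma mem2_elt {Q₁ : Set (Fin m)} {i : Fin m} (hi : i ∈ Q₁) :
    (xe i : GVertex S) ∈ bagW S Q₁ 2 := by
  show bagF Q₁ (.elt i) = 2
  simp [bagF, if_pos hi]

lemma mem3_elt {Q₁ : Set (Fin m)} {i : Fin m} (hi : i ∉ Q₁) :
    (xe i : GVertex S) ∈ bagW S Q₁ 3 := by
  show bagF Q₁ (.elt i) = 3
  simp [bagF, if_neg hi]

lemma forward (hn : 2 ≤ n) (hSne : ∀ j, (S j).Nonempty)
    (hSlast : S ⟨n - 1, Nat.sub_lt (by omega) Nat.one_pos⟩ = Set.univ)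
    (Q₁ Q₂ : Set (Fin m)) (hcol : IsTwoColouring S Q₁ Q₂) :
    ContainsAsContraction (GQS S) (SimpleGraph.pathGraph 5) := by
  obtain ⟨hcov, hdisj, hmeet⟩ := hcol
  have hn0 : 0 < n := by omega
  set j0 : Fin n := ⟨0, hn0⟩ with hj0def
  set jl : Fin n := ⟨n - 1, by omega⟩ with hjldef
  have hSl : ∀ i : Fin m, i ∈ S jl := fun i => by rw [hjldef, hSlast]; trivial
  refine ⟨bagW S Q₁, ?_, ?_, ?_, ?_, ?_⟩
  · -- nonempty
    intro h
    fin_cases h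
    · exact ⟨xv, rfl⟩
    · exact ⟨xq, rfl⟩
    · exact ⟨xh j0, rfl⟩
    · exact ⟨xc j0, rfl⟩
    · exact ⟨xw, rfl⟩
  · -- disjoint
    intro h1 h2 hne
    rw [Set.disjoint_left]
    intro x hx1 hx2
    exact hne (by rw [← hx1, ← hx2])
  · -- cover
    exact Set.eq_univ_of_forall fun x => Set.mem_iUnion.mpr ⟨_, rfl⟩
  · -- connectivity
    intro h
    fin_cases h
    · -- bag 0 : {v}
      refine conn_of_hub (xv : GVertex S) rfl ?_
      rintro ⟨x1, hok⟩ hx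
      cases x1 <;> first
        | exact SimpleGraph.Reachable.refl _
        | exact (by
            exfalso
            have hval := congrArg Fin.val hx
            simp only [bagF] at hval
            first
              | (split_ifs at hval <;> revert hval <;> decide)
              | (revert hval; decide))
    · -- bag 1 : {qstar, u1, u2}
      refine conn_of_hub (xq : GVertex S) rfl ?_
      rintro ⟨x1, hok⟩ hx
      cases x1 <;> first
        | exact SimpleGraph.Reachable.refl _
        | exact ireach _ hx rfl ((adj1 trivial : (GQS S).Adj xq xu1).symm)
        | exact ireach _ hx rfl ((adj1 trivial : (GQS S).Adj xq xu2).symm)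
        | exact (by
            exfalso
            have hval := congrArg Fin.val hx
            simp only [bagF] at hval
            first
              | (split_ifs at hval <;> revert hval <;> decide)
              | (revert hval; decide))
    · -- bag 2 : hyps, subs, Q₁-elements
      refine conn_of_hub (xh jl : GVertex S) rfl ?_
      have hreach_e : ∀ (i : Fin m) (hi : i ∈ Q₁),
          ((GQS S).induce (bagW S Q₁ 2)).Reachable
            ⟨xe i, mem2_elt hi⟩ ⟨xh jl, rfl⟩ := fun i hi =>
        (ireach (bagW S Q₁ 2) (mem2_elt hi) rfl
            ((adj1 rfl : (GQS S).Adj (xs i jl (hSl i)) (xe i)).symm)).trans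
          (ireach (bagW S Q₁ 2) rfl rfl
            (adj1 rfl : (GQS S).Adj (xs i jl (hSl i)) (xh jl)))
      have hreach_h : ∀ j : Fin n,
          ((GQS S).induce (bagW S Q₁ 2)).Reachable ⟨xh j, rfl⟩ ⟨xh jl, rfl⟩ := by
        intro j
        obtain ⟨i, hiQ, hiS⟩ := (hmeet j).1
        exact ((ireach (bagW S Q₁ 2) rfl rfl
            ((adj1 rfl : (GQS S).Adj (xs i j hiS) (xh j)).symm)).trans
          (ireach (bagW S Q₁ 2) rfl (mem2_elt hiQ)
            (adj1 rfl : (GQS S).Adj (xs i j hiS) (xe i)))).trans (hreach_e i hiQ)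
      rintro ⟨x1, hok⟩ hx
      cases x1 with
      | hyp j => exact hreach_h j
      | sub i j =>
        exact (ireach (bagW S Q₁ 2) rfl rfl
          (adj1 rfl : (GQS S).Adj (xs i j hok) (xh j))).trans (hreach_h j)
      | elt i =>
        rcases Classical.em (i ∈ Q₁) with hiq | hiq
        · exact hreach_e i hiq
        · exfalso
          have hx2 : bagF (n := n) Q₁ (HVertex.elt i) = ⟨2, by omega⟩ := hx
          have h3 : bagF (n := n) Q₁ (HVertex.elt i) = 3 := mem3_elt (S := S) hiq
          exact absurd (show (2:ℕ) = (3:Fin 5).val from congrArg Fin.val (hx2.symm.trans h3)) (by decide)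
      | v => exact (by
            exfalso
            have hval := congrArg Fin.val hx
            simp only [bagF] at hval
            first
              | (split_ifs at hval <;> revert hval <;> decide)
              | (revert hval; decide))
      | qstar => exact (by
            exfalso
            have hval := congrArg Fin.val hx
            simp only [bagF] at hval
            first
              | (split_ifs at hval <;> revert hval <;> decide)
              | (revert hval; decide))
      | u1 => exact (by
            exfalso
            have hval := congrArg Fin.val hx
            simp only [bagF] at hval
            first
              | (split_ifs at hval <;> revert hval <;> decide)
              | (revert hval; decide))
      | u2 => exact (by
            exfalso
            have hval := congrArg Fin.val hx
            simp only [bagF] at hval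
            first
              | (split_ifs at hval <;> revert hval <;> decide)
              | (revert hval; decide))
      | copy k => exact (by
            exfalso
            have hval := congrArg Fin.val hx
            simp only [bagF] at hval
            first
              | (split_ifs at hval <;> revert hval <;> decide)
              | (revert hval; decide))
      | w => exact (by
            exfalso
            have hval := congrArg Fin.val hx
            simp only [bagF] at hval
            first
              | (split_ifs at hval <;> revert hval <;> decide)
              | (revert hval; decide))
    · -- bag 3 : copies, non-Q₁ elements
      refine conn_of_hub (xc jl : GVertex S) rfl ?_
      have hreach_e : ∀ (i : Fin m) (hi : i ∉ Q₁),
          ((GQS S).induce (bagW S Q₁ 3)).Reachable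
            ⟨xe i, mem3_elt hi⟩ ⟨xc jl, rfl⟩ := fun i hi =>
        ireach (bagW S Q₁ 3) (mem3_elt hi) rfl
          (adj1 (hSl i) : (GQS S).Adj (xe i) (xc jl))
      rintro ⟨x1, hok⟩ hx
      cases x1 with
      | copy k =>
        obtain ⟨i, hiQ, hiS⟩ := (hmeet k).2
        have hiq : i ∉ Q₁ := fun hh => Set.disjoint_left.mp hdisj hh hiQ
        exact (ireach (bagW S Q₁ 3) rfl (mem3_elt hiq)
          ((adj1 hiS : (GQS S).Adj (xe i) (xc k)).symm)).trans (hreach_e i hiq)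
      | elt i =>
        rcases Classical.em (i ∈ Q₁) with hiq | hiq
        · exfalso
          have hx2 : bagF (n := n) Q₁ (HVertex.elt i) = ⟨3, by omega⟩ := hx
          have h2 : bagF (n := n) Q₁ (HVertex.elt i) = 2 := mem2_elt (S := S) hiq
          exact absurd (show (3:ℕ) = (2:Fin 5).val from congrArg Fin.val (hx2.symm.trans h2)) (by decide)
        · exact hreach_e i hiq
      | v => exact (by
            exfalso
            have hval := congrArg Fin.val hx
            simp only [bagF] at hval
            first
              | (split_ifs at hval <;> revert hval <;> decide)
              | (revert hval; decide))
      | qstar => exact (by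
            exfalso
            have hval := congrArg Fin.val hx
            simp only [bagF] at hval
            first
              | (split_ifs at hval <;> revert hval <;> decide)
              | (revert hval; decide))
      | u1 => exact (by
            exfalso
            have hval := congrArg Fin.val hx
            simp only [bagF] at hval
            first
              | (split_ifs at hval <;> revert hval <;> decide)
              | (revert hval; decide))
      | u2 => exact (by
            exfalso
            have hval := congrArg Fin.val hx
            simp only [bagF] at hval
            first
              | (split_ifs at hval <;> revert hval <;> decide)
              | (revert hval; decide))
      | hyp j => exact (by
            exfalso
            have hval := congrArg Fin.val hx
            simp only [bagF] at hval
            first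
              | (split_ifs at hval <;> revert hval <;> decide)
              | (revert hval; decide))
      | sub i j => exact (by
            exfalso
            have hval := congrArg Fin.val hx
            simp only [bagF] at hval
            first
              | (split_ifs at hval <;> revert hval <;> decide)
              | (revert hval; decide))
      | w => exact (by
            exfalso
            have hval := congrArg Fin.val hx
            simp only [bagF] at hval
            first
              | (split_ifs at hval <;> revert hval <;> decide)
              | (revert hval; decide))
    · -- bag 4 : {w}
      refine conn_of_hub (xw : GVertex S) rfl ?_
      rintro ⟨x1, hok⟩ hx
      cases x1 <;> first
        | exact SimpleGraph.Reachable.refl _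
        | exact (by
            exfalso
            have hval := congrArg Fin.val hx
            simp only [bagF] at hval
            first
              | (split_ifs at hval <;> revert hval <;> decide)
              | (revert hval; decide))
  · -- adjacency condition
    have bag_adj : ∀ x y : GVertex S, (GQS S).Adj x y →
        bagF Q₁ x.1 = bagF Q₁ y.1 ∨
        (bagF Q₁ x.1).1 + 1 = (bagF Q₁ y.1).1 ∨ (bagF Q₁ y.1).1 + 1 = (bagF Q₁ x.1).1 := by
      intro x y hxy
      rcases x with ⟨x1, hokx⟩
      rcases y with ⟨y1, hoky⟩
      rcases GQS_adj.mp hxy with h | h <;>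
        cases x1 <;> cases y1 <;>
        simp only [baseAdj] at h <;>
        (try subst h) <;>
        simp only [bagF] <;>
        first
          | exact h.elim
          | decide
          | (split_ifs <;> decide)
    intro h1 h2 hne
    constructor
    · rintro ⟨p, hp, q, hq, hpq⟩
      have key := bag_adj p q hpq
      have hp' : bagF Q₁ p.1 = h1 := hp
      have hq' : bagF Q₁ q.1 = h2 := hq
      rw [hp', hq'] at key
      rcases key with h | h
      · exact absurd h hne
      · rw [pathGraph_adj]; exact h
    · intro hadj
      rw [pathGraph_adj] at hadj
      fin_cases h1 <;> fin_cases h2 <;>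
        first
          | exact absurd hadj (by decide)
          | exact ⟨xv, rfl, xu1, rfl, (adj1 trivial : (GQS S).Adj xu1 xv).symm⟩
          | exact ⟨xu1, rfl, xv, rfl, (adj1 trivial : (GQS S).Adj xu1 xv)⟩
          | exact ⟨xu1, rfl, xh j0, rfl, (adj1 trivial : (GQS S).Adj xu1 (xh j0))⟩
          | exact ⟨xh j0, rfl, xu1, rfl, (adj1 trivial : (GQS S).Adj xu1 (xh j0)).symm⟩
          | exact ⟨xh j0, rfl, xc j0, rfl, (adj1 trivial : (GQS S).Adj (xh j0) (xc j0))⟩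
          | exact ⟨xc j0, rfl, xh j0, rfl, (adj1 trivial : (GQS S).Adj (xh j0) (xc j0)).symm⟩
          | exact ⟨xc j0, rfl, xw, rfl, (adj1 trivial : (GQS S).Adj xw (xc j0)).symm⟩
          | exact ⟨xw, rfl, xc j0, rfl, (adj1 trivial : (GQS S).Adj xw (xc j0))⟩

end Helper
theorem stmt_14 {m n : ℕ} (S : Fin n → Set (Fin m)) (hn : 2 ≤ n)
    (hSne : ∀ j, (S j).Nonempty) (hSlast : S ⟨n - 1, by omega⟩ = Set.univ) :
    (∃ Q₁ Q₂ : Set (Fin m), IsTwoColouring S Q₁ Q₂) ↔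
      ContainsAsContraction (GQS S) (SimpleGraph.pathGraph 5) := by
  constructor
  · rintro ⟨Q₁, Q₂, hcol⟩
    exact Helper.forward hn hSne hSlast Q₁ Q₂ hcol
  · intro hC
    exact Helper.backward hn hSne hSlast hC
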